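/- Let α₁(t) = −1 + e^{2πit}, t ∈ [0,1], be the loop in ℂ \ {−1,1} based at 0 that surrounds −1 counterclockwise. For every k ∈ ℤ, the unique lift γ of α₁ under the covering map f = f₁ ∘ f₂ with initial point γ(0) = −i/2 + ik satisfies: γ(1) = −i/2 + i(k+1), the image of γ is contained in the closed left half-plane {z : Re z ≤ 0}, and Re γ(t) = 0 only for t = 0 and t = 1. -/

import Mathlib

open Complex unitInterval

/-- The set `iℤ = {i·m : m ∈ ℤ}` of integer multiples of `i`. -/
def intMulI : Set ℂ := {z : ℂ | ∃ m : ℤ, z = Complex.I * (m : ℂ)}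

/-- `f₂(z) = (e^{πz} − 1)/(e^{πz} + 1)`. -/
noncomputable def fTwo (z : ℂ) : ℂ :=
  (Complex.exp (Real.pi * z) - 1) / (Complex.exp (Real.pi * z) + 1)

/-- `f₁(w) = (1/2)(w + 1/w)`. -/
noncomputable def fOne (w : ℂ) : ℂ := (w + w⁻¹) / 2

/-- The covering map `f = f₁ ∘ f₂` from `ℂ \ iℤ` onto `ℂ \ {−1,1}`. -/
noncomputable def fCov (z : ℂ) : ℂ := fOne (fTwo z)

/-- The loop `α₁(t) = −1 + e^{2πit}` in `ℂ \ {−1,1}` based at `0`,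
surrounding `−1` counterclockwise. -/
noncomputable def alphaOne (t : ℝ) : ℂ := -1 + Complex.exp (2 * Real.pi * Complex.I * t)

noncomputable def uu (t : ℝ) : ℂ := Complex.exp (2 * Real.pi * Complex.I * t)

lemma abs_uu (t : ℝ) : ‖uu t‖ = 1 := by
  rw [uu, Complex.norm_exp]
  simp [Complex.mul_re, Complex.mul_im]

lemma two_sub_uu_ne (t : ℝ) : (2 : ℂ) - uu t ≠ 0 := by
  intro h
  have h2 : uu t = 2 := by linear_combination -h
  have := abs_uu t
  rw [h2] at this
  norm_num at this

lemma uu_slit (t : ℝ) : (2 : ℂ) - uu t ∈ Complex.slitPlane := by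
  rw [Complex.mem_slitPlane_iff]
  left
  have h := Complex.abs_re_le_norm (uu t)
  rw [abs_uu] at h
  have := (abs_le.mp h).2
  simp only [Complex.sub_re]
  norm_num
  linarith

lemma continuous_uu : Continuous uu := by
  unfold uu
  fun_prop

noncomputable def gam (k : ℤ) (t : ℝ) : ℂ :=
  Complex.I * t - Complex.log (2 - uu t) / ((2 * Real.pi : ℝ) : ℂ) - Complex.I / 2
    + Complex.I * k

lemma continuous_gam (k : ℤ) : Continuous (gam k) := by
  unfold gam
  have hlog : Continuous fun t : ℝ => Complex.log (2 - uu t) :=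
    Continuous.clog (continuous_const.sub continuous_uu) (fun t => uu_slit t)
  continuity

lemma gam_re (k : ℤ) (t : ℝ) :
    (gam k t).re = -(Real.log (‖2 - uu t‖) / (2 * Real.pi)) := by
  have h : Complex.log (2 - uu t) / ((2 * Real.pi : ℝ) : ℂ) =
      Complex.log (2 - uu t) / ((2 * Real.pi : ℝ) : ℂ) := rfl
  simp only [gam, Complex.add_re, Complex.sub_re, Complex.mul_re, Complex.I_re,
    Complex.ofReal_re, Complex.I_im, Complex.ofReal_im, Complex.div_ofReal_re,
    Complex.log_re, Complex.div_re, Complex.intCast_im, Complex.intCast_re]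
  have hπ := Real.pi_ne_zero
  simp only [Complex.normSq_ofReal, Complex.normSq_ofNat, Complex.im_ofNat]
  field_simp
  ring

lemma pi_ne_zeroC : ((Real.pi : ℂ)) ≠ 0 := Complex.ofReal_ne_zero.mpr Real.pi_ne_zero

lemma exp_two_pi_gam (k : ℤ) (t : ℝ) :
    Complex.exp (2 * (Real.pi : ℂ) * gam k t) = -uu t / (2 - uu t) := by
  have h2 : 2 * (Real.pi : ℂ) * gam k t =
      (2 * Real.pi * Complex.I * t) + (-(Complex.log (2 - uu t)))
        + (Real.pi * Complex.I) + (((k - 1 : ℤ) : ℂ) * (2 * Real.pi * Complex.I)) := by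
    unfold gam
    push_cast
    field_simp [pi_ne_zeroC]
    ring
  rw [h2, Complex.exp_add, Complex.exp_add, Complex.exp_add, Complex.exp_neg,
    Complex.exp_log (two_sub_uu_ne t), Complex.exp_pi_mul_I,
    Complex.exp_int_mul_two_pi_mul_I]
  rw [show Complex.exp (2 * Real.pi * Complex.I * t) = uu t from rfl]
  field_simp

lemma exp_gam_sq (k : ℤ) (t : ℝ) :
    Complex.exp ((Real.pi : ℂ) * gam k t) ^ 2 = -uu t / (2 - uu t) := by
  rw [sq, ← Complex.exp_add, ← exp_two_pi_gam k t]
  ring_nf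

lemma q_ne_one (t : ℝ) : -uu t / (2 - uu t) ≠ 1 := by
  intro h
  rw [div_eq_one_iff_eq (two_sub_uu_ne t)] at h
  have : (2 : ℂ) = 0 := by linear_combination -h
  norm_num at this

lemma exp_pi_gam_ne_one (k : ℤ) (t : ℝ) : Complex.exp ((Real.pi : ℂ) * gam k t) ≠ 1 := by
  intro h
  have := exp_gam_sq k t
  rw [h] at this
  rw [one_pow] at this
  exact q_ne_one t this.symm


lemma exp_pi_gam_ne_neg_one (k : ℤ) (t : ℝ) :
    Complex.exp ((Real.pi : ℂ) * gam k t) ≠ -1 := by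
  intro h
  have := exp_gam_sq k t
  rw [h] at this
  norm_num at this
  exact q_ne_one t this.symm

/-- `z ∉ iℤ` iff `e^{πz} ≠ ±1`. -/
lemma not_mem_intMulI_iff (z : ℂ) :
    z ∉ intMulI ↔ Complex.exp ((Real.pi : ℂ) * z) ≠ 1 ∧
      Complex.exp ((Real.pi : ℂ) * z) ≠ -1 := by
  constructor
  · intro hz
    constructor
    · intro h
      obtain ⟨n, hn⟩ := Complex.exp_eq_one_iff.mp h
      refine hz ⟨2 * n, mul_left_cancel₀ pi_ne_zeroC ?_⟩
      push_cast at hn ⊢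
      linear_combination hn
    · intro h
      have h1 : Complex.exp ((Real.pi : ℂ) * z - Real.pi * Complex.I) = 1 := by
        rw [Complex.exp_sub, h, Complex.exp_pi_mul_I]
        norm_num
      obtain ⟨n, hn⟩ := Complex.exp_eq_one_iff.mp h1
      refine hz ⟨2 * n + 1, mul_left_cancel₀ pi_ne_zeroC ?_⟩
      push_cast at hn ⊢
      linear_combination hn
  · rintro ⟨h1, h2⟩ ⟨m, hm⟩
    have hexp : Complex.exp ((Real.pi : ℂ) * z) = (-1 : ℂ) ^ m := by
      rw [hm, show (Real.pi : ℂ) * (Complex.I * m) = (m : ℤ) * ((Real.pi : ℂ) * Complex.I) by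
        push_cast; ring, Complex.exp_int_mul, Complex.exp_pi_mul_I]
    rcases Int.even_or_odd m with he | ho
    · exact h1 (by rw [hexp, he.neg_one_zpow])
    · exact h2 (by rw [hexp, ho.neg_one_zpow])

lemma fCov_formula (z : ℂ) (h1 : Complex.exp ((Real.pi : ℂ) * z) ≠ 1)
    (h2 : Complex.exp ((Real.pi : ℂ) * z) ≠ -1) :
    fCov z = (Complex.exp ((Real.pi : ℂ) * z) ^ 2 + 1) /
      (Complex.exp ((Real.pi : ℂ) * z) ^ 2 - 1) := by
  unfold fCov fOne fTwo
  set E := Complex.exp ((Real.pi : ℂ) * z) with hE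
  have hB : E - 1 ≠ 0 := sub_ne_zero.mpr h1
  have hA : E + 1 ≠ 0 := fun h => h2 (by linear_combination h)
  have hC : E ^ 2 - 1 ≠ 0 := by
    have := mul_ne_zero hB hA
    rwa [show (E - 1) * (E + 1) = E ^ 2 - 1 by ring] at this
  rw [inv_div]
  field_simp
  ring

lemma gam_not_mem (k : ℤ) (t : ℝ) : gam k t ∉ intMulI :=
  (not_mem_intMulI_iff _).mpr ⟨exp_pi_gam_ne_one k t, exp_pi_gam_ne_neg_one k t⟩

lemma fCov_gam (k : ℤ) (t : ℝ) : fCov (gam k t) = alphaOne t := by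
  rw [fCov_formula _ (exp_pi_gam_ne_one k t) (exp_pi_gam_ne_neg_one k t), exp_gam_sq,
    alphaOne]
  rw [show Complex.exp (2 * Real.pi * Complex.I * t) = uu t from rfl]
  have h1 : -uu t / (2 - uu t) - 1 ≠ 0 := sub_ne_zero.mpr (q_ne_one t)
  field_simp [two_sub_uu_ne t]
  ring

lemma uu_zero : uu 0 = 1 := by simp [uu]

lemma uu_one : uu 1 = 1 := by
  rw [uu]
  push_cast
  rw [mul_one, Complex.exp_two_pi_mul_I]

lemma gam_zero (k : ℤ) : gam k 0 = -Complex.I / 2 + Complex.I * (k : ℂ) := by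
  rw [gam, uu_zero]
  norm_num
  ring

lemma gam_one (k : ℤ) : gam k 1 = -Complex.I / 2 + Complex.I * ((k : ℂ) + 1) := by
  rw [gam, uu_one]
  norm_num
  ring

lemma one_le_abs_two_sub_uu (t : ℝ) : 1 ≤ ‖2 - uu t‖ := by
  have h : ‖(2 : ℂ)‖ ≤ ‖2 - uu t‖ + ‖uu t‖ := by
    calc ‖(2 : ℂ)‖ = ‖(2 - uu t) + uu t‖ := by ring_nf
    _ ≤ _ := norm_add_le _ _
  rw [abs_uu] at h
  simp only [Complex.norm_two] at h
  linarith

lemma gam_re_nonpos (k : ℤ) (t : ℝ) : (gam k t).re ≤ 0 := by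
  rw [gam_re]
  have h1 := one_le_abs_two_sub_uu t
  have h2 : 0 ≤ Real.log (‖2 - uu t‖) := Real.log_nonneg h1
  have h3 : 0 < 2 * Real.pi := by positivity
  have := div_nonneg h2 h3.le
  linarith

lemma gam_re_eq_zero (k : ℤ) (t : ℝ) (h : (gam k t).re = 0) : uu t = 1 := by
  rw [gam_re] at h
  have h3 : 0 < 2 * Real.pi := by positivity
  have hlog : Real.log (‖2 - uu t‖) = 0 := by
    rw [neg_eq_zero, div_eq_zero_iff] at h
    rcases h with h' | h'
    · exact h'
    · linarith
  have h1 := one_le_abs_two_sub_uu t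
  have habs : ‖2 - uu t‖ = 1 := by
    rcases Real.log_eq_zero.mp hlog with h' | h' | h' <;> linarith
  -- turn into re/im statement
  have hsq : Complex.normSq (2 - uu t) = 1 := by
    have := congrArg (fun x => x ^ 2) habs
    simpa [Complex.sq_norm] using this
  have hsq2 : Complex.normSq (uu t) = 1 := by
    have := congrArg (fun x => x ^ 2) (abs_uu t)
    simpa [Complex.sq_norm] using this
  rw [Complex.normSq_apply] at hsq hsq2
  simp only [Complex.sub_re, Complex.sub_im] at hsq
  norm_num at hsq
  have hre : (uu t).re = 1 := by nlinarith
  have him : (uu t).im = 0 := by nlinarith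
  exact Complex.ext (by simp [hre]) (by simp [him])

lemma uu_eq_one_imp (t : ℝ) (h0 : 0 ≤ t) (h1 : t ≤ 1) (h : uu t = 1) : t = 0 ∨ t = 1 := by
  rw [uu] at h
  obtain ⟨n, hn⟩ := Complex.exp_eq_one_iff.mp h
  have hI : (2 : ℂ) * Real.pi * Complex.I ≠ 0 := by
    simp [pi_ne_zeroC, Complex.I_ne_zero, Real.pi_ne_zero]
  have ht : (t : ℂ) = (n : ℂ) := by
    apply mul_left_cancel₀ hI
    rw [hn]
    ring
  have ht' : t = (n : ℝ) := by exact_mod_cast ht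
  rw [ht'] at h0 h1
  have hn0 : (0 : ℤ) ≤ n := by exact_mod_cast h0
  have hn1 : n ≤ 1 := by exact_mod_cast h1
  interval_cases n
  · left; simpa using ht'
  · right; simpa using ht'

lemma two_pi_ne_zeroC : (2 * (Real.pi : ℂ)) ≠ 0 := by
  simp [pi_ne_zeroC, Real.pi_ne_zero]

lemma q_ne_zero (t : ℝ) : -uu t / (2 - uu t) ≠ 0 :=
  div_ne_zero (neg_ne_zero.mpr (Complex.exp_ne_zero _)) (two_sub_uu_ne t)

lemma lift_sq_eq (z : ℂ) (t : ℝ) (hno : z ∉ intMulI) (hcov : fCov z = alphaOne t) :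
    Complex.exp ((Real.pi : ℂ) * z) ^ 2 = -uu t / (2 - uu t) := by
  obtain ⟨h1, h2⟩ := (not_mem_intMulI_iff z).mp hno
  rw [fCov_formula z h1 h2] at hcov
  set E := Complex.exp ((Real.pi : ℂ) * z) with hE
  have hB : E - 1 ≠ 0 := sub_ne_zero.mpr h1
  have hA : E + 1 ≠ 0 := fun h => h2 (by linear_combination h)
  have hC : E ^ 2 - 1 ≠ 0 := by
    have := mul_ne_zero hB hA
    rwa [show (E - 1) * (E + 1) = E ^ 2 - 1 by ring] at this
  rw [div_eq_iff hC, alphaOne] at hcov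
  rw [show Complex.exp (2 * Real.pi * Complex.I * t) = uu t from rfl] at hcov
  rw [eq_div_iff (two_sub_uu_ne t)]
  linear_combination hcov

lemma diff_int (k : ℤ) (z : ℂ) (t : ℝ) (hno : z ∉ intMulI)
    (hcov : fCov z = alphaOne t) : ∃ n : ℤ, z - gam k t = (n : ℂ) * Complex.I := by
  have h1 := lift_sq_eq z t hno hcov
  have h2 := exp_gam_sq k t
  have hexp : Complex.exp (2 * (Real.pi : ℂ) * (z - gam k t)) = 1 := by
    rw [show 2 * (Real.pi : ℂ) * (z - gam k t) =
      ((Real.pi : ℂ) * z + (Real.pi : ℂ) * z) - ((Real.pi : ℂ) * gam k t + (Real.pi : ℂ) * gam k t) by ring,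
      Complex.exp_sub, Complex.exp_add, Complex.exp_add, ← sq, ← sq, h1, h2]
    exact div_self (q_ne_zero t)
  obtain ⟨n, hn⟩ := Complex.exp_eq_one_iff.mp hexp
  refine ⟨n, mul_left_cancel₀ two_pi_ne_zeroC ?_⟩
  rw [hn]
  ring


/-- For every `k ∈ ℤ`, the unique lift `γ` of `α₁` under `f = f₁ ∘ f₂` with initial point
`−i/2 + ik` exists, is unique, terminates at `−i/2 + i(k+1)`, has image in the closed left
half-plane, and meets the imaginary axis only at its endpoints. -/
theorem lift_of_alpha_one (k : ℤ) :
    ∃ γ : I → ℂ,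
      (Continuous γ ∧ (∀ t : I, γ t ∉ intMulI) ∧
        (∀ t : I, fCov (γ t) = alphaOne (t : ℝ)) ∧
        γ 0 = -Complex.I / 2 + Complex.I * (k : ℂ)) ∧
      (∀ γ' : I → ℂ,
        (Continuous γ' ∧ (∀ t : I, γ' t ∉ intMulI) ∧
          (∀ t : I, fCov (γ' t) = alphaOne (t : ℝ)) ∧
          γ' 0 = -Complex.I / 2 + Complex.I * (k : ℂ)) → γ' = γ) ∧
      γ 1 = -Complex.I / 2 + Complex.I * ((k : ℂ) + 1) ∧
      (∀ t : I, (γ t).re ≤ 0) ∧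
      (∀ t : I, (γ t).re = 0 → t = 0 ∨ t = 1) := by
  have hγcont : Continuous fun t : I => gam k (t : ℝ) :=
    (continuous_gam k).comp continuous_subtype_val
  refine ⟨fun t => gam k (t : ℝ),
    ⟨hγcont, fun t => gam_not_mem k t, fun t => fCov_gam k t, ?_⟩, ?_, ?_,
    fun t => gam_re_nonpos k t, ?_⟩
  · show gam k ((0 : I) : ℝ) = _
    rw [show ((0 : I) : ℝ) = 0 from rfl]
    exact gam_zero k
  · rintro γ' ⟨hc, hno, hcov, h0⟩
    have hS : {t : I | γ' t = gam k (t : ℝ)} =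
        (fun t : I => ‖γ' t - gam k (t : ℝ)‖) ⁻¹' Set.Iio 1 := by
      apply Set.Subset.antisymm
      · intro t ht
        simp only [Set.mem_setOf_eq] at ht
        simp [ht]
      · intro t ht
        simp only [Set.mem_preimage, Set.mem_Iio] at ht
        obtain ⟨n, hn⟩ := diff_int k (γ' t) t (hno t) (hcov t)
        rw [hn] at ht
        have habs : |(n : ℝ)| < 1 := by
          simpa [norm_mul, Complex.norm_I, Complex.norm_intCast] using ht
        have hn0 : n = 0 := by
          rw [← Int.cast_abs] at habs
          have h2 : |n| < 1 := by exact_mod_cast habs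
          exact Int.abs_lt_one_iff.mp h2
        rw [hn0] at hn
        simp only [Set.mem_setOf_eq]
        have := sub_eq_zero.mp (by simpa using hn)
        exact this
    have hclopen : IsClopen {t : I | γ' t = gam k (t : ℝ)} := by
      constructor
      · exact isClosed_eq hc hγcont
      · rw [hS]
        exact (hc.sub hγcont).norm.isOpen_preimage _ isOpen_Iio
    have hne : (0 : I) ∈ {t : I | γ' t = gam k (t : ℝ)} := by
      simp only [Set.mem_setOf_eq]
      rw [h0, show ((0 : I) : ℝ) = 0 from rfl, gam_zero]
    have huniv := hclopen.eq_univ ⟨0, hne⟩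
    funext t
    have : t ∈ {t : I | γ' t = gam k (t : ℝ)} := huniv ▸ Set.mem_univ t
    exact this
  · show gam k ((1 : I) : ℝ) = _
    rw [show ((1 : I) : ℝ) = 1 from rfl]
    exact gam_one k
  · intro t ht
    have h1 := gam_re_eq_zero k t ht
    rcases uu_eq_one_imp t t.2.1 t.2.2 h1 with h | h
    · exact Or.inl (Subtype.ext h)
    · exact Or.inr (Subtype.ext h)
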